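/- Let X be a path-connected topological space with basepoint x₀ and H ≤ π₁(X,x₀). If X is homotopically path Hausdorff relative to H, then H is (S,d_∞)-closed. Conversely, if the path space P(X) (all paths [0,1] → X with the compact-open topology) is first countable — for instance if X is metrizable — and H is (S,d_∞)-closed, then X is homotopically path Hausdorff relative to H. -/

import Mathlib

open CategoryTheory
noncomputable section

universe u

attribute [local instance] Path.Homotopic.setoid

/-- The element of the fundamental group determined by a loop. -/
def loopClass {X : Type u} [TopologicalSpace X] {x : X} (γ : Path x x) :
    FundamentalGroup X x :=
  FundamentalGroup.fromPath (X := TopCat.of X) ⟦γ⟧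

/-- The homomorphism on fundamental groups induced by a based continuous map. -/
def inducedHom {X Y : Type u} [TopologicalSpace X] [TopologicalSpace Y]
    (f : C(X, Y)) (x : X) {y : Y} (h : f x = y) :
    FundamentalGroup X x →* FundamentalGroup Y y := by
  subst h
  exact (FundamentalGroupoid.fundamentalGroupoidFunctor.map
    (X := TopCat.of X) (Y := TopCat.of Y) (TopCat.ofHom f)).mapEnd ⟨x⟩

/-- Change of basepoint along a path, as an isomorphism of fundamental groups. -/
def pathConjEquiv {X : Type u} [TopologicalSpace X] {x y : X} (α : Path x y) :
    FundamentalGroup X x ≃* FundamentalGroup X y :=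
  FundamentalGroup.fundamentalGroupMulEquivOfPath α

/-- The path-conjugate subgroup `H^α = [α⁻]·H·[α]` of `π₁(X, α 1)`. -/
def conjSubgroup {X : Type u} [TopologicalSpace X] {x y : X} (α : Path x y)
    (H : Subgroup (FundamentalGroup X x)) : Subgroup (FundamentalGroup X y) :=
  H.map (pathConjEquiv α).toMonoidHom

/-- A subgroup `H ≤ π₁(X,x₀)` is `(T,g)`-closed for the closure pair `(T,g)` on the
based test space `(𝕋,t₀)` if for every continuous map `f : 𝕋 → X` with `f t₀ = x₀`
and `f#(T) ≤ H` one has `f#(g) ∈ H`. -/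
def IsTGClosed {T : Type u} [TopologicalSpace T] (t₀ : T)
    (Tsub : Subgroup (FundamentalGroup T t₀)) (g : FundamentalGroup T t₀)
    {X : Type u} [TopologicalSpace X] (x₀ : X)
    (H : Subgroup (FundamentalGroup X x₀)) : Prop :=
  ∀ (f : C(T, X)) (hf : f t₀ = x₀),
    Subgroup.map (inducedHom f t₀ hf) Tsub ≤ H → inducedHom f t₀ hf g ∈ H

/-- The `(T,g)`-closure of a subgroup `H ≤ π₁(X,x₀)`: the intersection of all
`(T,g)`-closed subgroups of `π₁(X,x₀)` containing `H`. -/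
def tgClosure {T : Type u} [TopologicalSpace T] (t₀ : T)
    (Tsub : Subgroup (FundamentalGroup T t₀)) (g : FundamentalGroup T t₀)
    {X : Type u} [TopologicalSpace X] (x₀ : X)
    (H : Subgroup (FundamentalGroup X x₀)) : Subgroup (FundamentalGroup X x₀) :=
  sInf {K : Subgroup (FundamentalGroup X x₀) | IsTGClosed t₀ Tsub g x₀ K ∧ H ≤ K}

/-- Equality of right cosets `H·a = H·b`. -/
def rightCosetEq {G : Type*} [Group G] (H : Subgroup G) (a b : G) : Prop :=
  (fun h => h * a) '' (H : Set G) = (fun h => h * b) '' (H : Set G)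

/-! ### The dyadic arc space `𝔻` -/

/-- The dyadic arc space `𝔻 ⊆ ℝ²`: the union of the base arc `[0,1] × {0}` and, for
each dyadic unital pair `(n,j)` (`n ≥ 1`, `1 ≤ j ≤ 2^(n-1)`), the upper semicircle of
radius `2⁻ⁿ` centered at `((2j-1)/2ⁿ, 0)`. -/
def DAset : Set (ℝ × ℝ) :=
  (Set.Icc (0 : ℝ) 1 ×ˢ ({0} : Set ℝ)) ∪
  {p | ∃ n j : ℕ, 0 < n ∧ 1 ≤ j ∧ j ≤ 2 ^ (n - 1) ∧
    (p.1 - (2 * (j : ℝ) - 1) / 2 ^ n) ^ 2 + p.2 ^ 2 = (1 / 2 ^ n) ^ 2 ∧ 0 ≤ p.2}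

/-- The basepoint `d₀ = (0,0)` of `𝔻`. -/
def dZero : DAset := ⟨(0, 0), Or.inl ⟨⟨le_refl _, zero_le_one⟩, rfl⟩⟩

/-- The point `(1,0)` of `𝔻`. -/
def dOne : DAset := ⟨(1, 0), Or.inl ⟨⟨zero_le_one, le_refl _⟩, rfl⟩⟩

/-- The underlying function of the standard arc `ℓ_{n,j}`:
`ℓ_{n,j}(u) = ((u+j-1)/2^(n-1), √(u-u²)/2^(n-1))`. -/
def stdArcFun (n j : ℕ) (u : ℝ) : ℝ × ℝ :=
  ((u + (j : ℝ) - 1) / 2 ^ (n - 1), Real.sqrt (u - u ^ 2) / 2 ^ (n - 1))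

lemma lamOne_mem (t : ℝ) (h0 : 0 ≤ t) (h1 : t ≤ 1) :
    ((t, Real.sqrt (t - t ^ 2)) : ℝ × ℝ) ∈ DAset := by
  have hnn : (0 : ℝ) ≤ t - t ^ 2 := by nlinarith
  have key : (t - (2 * ((1 : ℕ) : ℝ) - 1) / 2 ^ (1 : ℕ)) ^ 2 + Real.sqrt (t - t ^ 2) ^ 2
      = (1 / 2 ^ (1 : ℕ)) ^ 2 := by
    rw [Real.sq_sqrt hnn]
    push_cast
    ring_nf
  exact Or.inr ⟨1, 1, one_pos, le_refl _, by norm_num, key, Real.sqrt_nonneg _⟩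

/-- The path `λ₁ = ℓ_{1,1}` along the top semicircle of `𝔻`, from `d₀` to `(1,0)`. -/
def lamOnePath : Path dZero dOne where
  toFun t := ⟨((t : ℝ), Real.sqrt ((t : ℝ) - (t : ℝ) ^ 2)), lamOne_mem _ t.2.1 t.2.2⟩
  continuous_toFun := by
    apply Continuous.subtype_mk
    fun_prop
  source' := by
    apply Subtype.ext
    norm_num [dZero]
  target' := by
    apply Subtype.ext
    norm_num [dOne]

/-- The path `λ_∞(t) = (t,0)` along the base arc of `𝔻`, from `d₀` to `(1,0)`. -/
def lamInfPath : Path dZero dOne where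
  toFun t := ⟨((t : ℝ), 0), Or.inl ⟨⟨t.2.1, t.2.2⟩, rfl⟩⟩
  continuous_toFun := by
    apply Continuous.subtype_mk
    fun_prop
  source' := by
    apply Subtype.ext
    norm_num [dZero]
  target' := by
    apply Subtype.ext
    norm_num [dOne]

/-- The element `d_∞ = [λ₁ · λ_∞⁻] ∈ π₁(𝔻, d₀)`. -/
def dInfElem : FundamentalGroup DAset dZero :=
  loopClass (lamOnePath.trans lamInfPath.symm)

/-- A loop in `𝔻` based at `d₀` is a finite concatenation of standard paths if, for some
`m ≥ 1`, on each subinterval `[i/m, (i+1)/m]` it traverses some standard arc `ℓ_{n,j}`,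
affinely reparametrized, either forwards or backwards. -/
def IsStdConcat (γ : Path dZero dZero) : Prop :=
  ∃ m : ℕ, 0 < m ∧ ∀ i : ℕ, i < m →
    ∃ n j : ℕ, 0 < n ∧ 1 ≤ j ∧ j ≤ 2 ^ (n - 1) ∧
      ((∀ t : unitInterval, (i : ℝ) / m ≤ (t : ℝ) → (t : ℝ) ≤ ((i : ℝ) + 1) / m →
          (↑(γ t) : ℝ × ℝ) = stdArcFun n j ((m : ℝ) * (t : ℝ) - i)) ∨
       (∀ t : unitInterval, (i : ℝ) / m ≤ (t : ℝ) → (t : ℝ) ≤ ((i : ℝ) + 1) / m →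
          (↑(γ t) : ℝ × ℝ) = stdArcFun n j (1 - ((m : ℝ) * (t : ℝ) - i))))

/-- The subgroup `D ≤ π₁(𝔻, d₀)` of homotopy classes of loops at `d₀` that are finite
concatenations of standard paths and their reverses. -/
def DSub : Subgroup (FundamentalGroup DAset dZero) :=
  Subgroup.closure {g | ∃ γ : Path dZero dZero, IsStdConcat γ ∧ g = loopClass γ}

/-- The underlying function of the level-`n` path `λ_n = ℓ_{n,1}·ℓ_{n,2}·⋯·ℓ_{n,2^(n-1)}`. -/
def dyadicLevelFun (n : ℕ) (t : ℝ) : ℝ × ℝ :=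
  (t, Real.sqrt (Int.fract (2 ^ (n - 1) * t) - Int.fract (2 ^ (n - 1) * t) ^ 2) / 2 ^ (n - 1))

/-- Specification of the family `λ_n`, `n ≥ 1`, of level paths of `𝔻`. -/
def LamSpec (lam : ℕ → Path dZero dOne) : Prop :=
  ∀ n : ℕ, 0 < n → ∀ t : unitInterval, (↑((lam n) t) : ℝ × ℝ) = dyadicLevelFun n (t : ℝ)

/-- The generators `s_n = [λ_n · λ_{n+1}⁻]` and the subgroup
`S = ⟨s_n : n ≥ 1⟩ ≤ π₁(𝔻, d₀)`. -/
def SSub (lam : ℕ → Path dZero dOne) : Subgroup (FundamentalGroup DAset dZero) :=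
  Subgroup.closure {g | ∃ n : ℕ, 0 < n ∧ g = loopClass ((lam n).trans (lam (n + 1)).symm)}

/-- The element `d_∞ = [λ₁ · λ_∞⁻] ∈ π₁(𝔻, d₀)`, formed from a given family of
level paths. -/
def dInfOf (lam : ℕ → Path dZero dOne) : FundamentalGroup DAset dZero :=
  loopClass ((lam 1).trans lamInfPath.symm)

/-- `X` is homotopically path Hausdorff relative to `H ≤ π₁(X,x₀)`: for every pair of
paths `α, β` from `x₀` with the same endpoint and `[α·β⁻] ∉ H`, there are `n ≥ 1` and
open sets `U₁, …, U_{2^(n-1)}` covering `α` along the dyadic subdivision such that every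
path `γ` running through the `U_j` along the same subdivision and agreeing with `α` at
the subdivision points satisfies `[γ·β⁻] ∉ H`. -/
def HomotopicallyPathHausdorffRel {X : Type} [TopologicalSpace X] (x₀ : X)
    (H : Subgroup (FundamentalGroup X x₀)) : Prop :=
  ∀ (x : X) (α β : Path x₀ x), loopClass (α.trans β.symm) ∉ H →
    ∃ n : ℕ, 0 < n ∧ ∃ U : ℕ → Set X,
      (∀ j : ℕ, 1 ≤ j → j ≤ 2 ^ (n - 1) → IsOpen (U j)) ∧
      (∀ j : ℕ, 1 ≤ j → j ≤ 2 ^ (n - 1) → ∀ t : ℝ,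
        ((j : ℝ) - 1) / 2 ^ (n - 1) ≤ t → t ≤ (j : ℝ) / 2 ^ (n - 1) →
        α.extend t ∈ U j) ∧
      ∀ γ : Path x₀ x,
        (∀ j : ℕ, 1 ≤ j → j ≤ 2 ^ (n - 1) → ∀ t : ℝ,
          ((j : ℝ) - 1) / 2 ^ (n - 1) ≤ t → t ≤ (j : ℝ) / 2 ^ (n - 1) →
          γ.extend t ∈ U j) →
        (∀ j : ℕ, j ≤ 2 ^ (n - 1) →
          γ.extend ((j : ℝ) / 2 ^ (n - 1)) = α.extend ((j : ℝ) / 2 ^ (n - 1))) →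
        loopClass (γ.trans β.symm) ∉ H

section Algebra

variable {X : Type u} [TopologicalSpace X] {x₀ x : X}

/-- A path as a morphism in the fundamental groupoid. -/
def homOf {x y : X} (a : Path x y) :
    (⟨x⟩ : FundamentalGroupoid X) ⟶ (⟨y⟩ : FundamentalGroupoid X) := ⟦a⟧

lemma homOf_trans {x y z : X} (a : Path x y) (b : Path y z) :
    homOf (a.trans b) = homOf a ≫ homOf b := by
  rw [FundamentalGroupoid.comp_eq]
  exact Path.Homotopic.Quotient.mk_trans a b

lemma homOf_symm {x y : X} (a : Path x y) :
    homOf a.symm = Groupoid.inv (homOf a) := rfl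

lemma loopClass_hom (γ : Path x₀ x₀) : loopClass γ = homOf γ := rfl

lemma loopClass_mul (a b : Path x₀ x₀) :
    loopClass a * loopClass b = loopClass (b.trans a) := by
  show homOf b ≫ homOf a = homOf (b.trans a)
  rw [homOf_trans]

lemma loopClass_coset_mul (a b c : Path x₀ x) :
    loopClass (a.trans c.symm) = loopClass (b.trans c.symm) * loopClass (a.trans b.symm) := by
  show homOf (a.trans c.symm) = homOf (a.trans b.symm) ≫ homOf (b.trans c.symm)
  rw [homOf_trans, homOf_trans, homOf_trans, homOf_symm, homOf_symm,
    Groupoid.inv_eq_inv, Groupoid.inv_eq_inv]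
  simp

lemma loopClass_coset_inv (a b : Path x₀ x) :
    (loopClass (a.trans b.symm))⁻¹ = loopClass (b.trans a.symm) := by
  show Groupoid.inv (homOf (a.trans b.symm)) = homOf (b.trans a.symm)
  rw [homOf_trans, homOf_trans, homOf_symm, homOf_symm,
    Groupoid.inv_eq_inv, Groupoid.inv_eq_inv, Groupoid.inv_eq_inv]
  simp

lemma loopClass_congr {a b : Path x₀ x₀} (h : ∀ t, a t = b t) :
    loopClass a = loopClass b := by
  have : a = b := by ext t; exact h t
  rw [this]

lemma inducedHom_loopClass {Y : Type u} [TopologicalSpace Y] (f : C(X, Y)) (x : X)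
    {y : Y} (h : f x = y) (ℓ : Path x x) :
    inducedHom f x h (loopClass ℓ) = loopClass ((ℓ.map f.continuous).cast h.symm h.symm) := by
  subst h
  show (FundamentalGroupoid.fundamentalGroupoidFunctor.map
      (X := TopCat.of X) (Y := TopCat.of Y) (TopCat.ofHom f)).map (homOf ℓ)
    = homOf ((ℓ.map f.continuous).cast rfl rfl)
  have : (ℓ.map f.continuous).cast rfl rfl = ℓ.map f.continuous := by
    ext t
    simp [Path.cast]
  rw [this]
  rfl

end Algebra
section Helpers

lemma exists_eps {M : Type u} [MetricSpace M] {K O : Set M} (hK : IsCompact K)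
    (hO : IsOpen O) (hKO : K ⊆ O) :
    ∃ ε > 0, ∀ p q : M, q ∈ K → dist p q < ε → p ∈ O := by
  rcases hK.exists_thickening_subset_open hO hKO with ⟨ε, hε, hsub⟩
  exact ⟨ε, hε, fun p q hq hd => hsub (Metric.mem_thickening_iff.2 ⟨q, hq, hd⟩)⟩

lemma fract_dyadic {m n j : ℕ} (hn : 0 < n) (hmn : n ≤ m) :
    Int.fract ((2:ℝ)^(m-1) * ((j:ℝ)/2^(n-1))) = 0 := by
  have h : (2:ℝ)^(m-1) * ((j:ℝ)/2^(n-1)) = ((j * 2^(m-n) : ℕ) : ℝ) := by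
    push_cast
    have h2 : (2:ℝ)^(m-1) = 2^(m-n) * 2^(n-1) := by
      rw [← pow_add]
      congr 1
      omega
    field_simp [h2]
    rw [h2]; ring
  rw [h, Int.fract_natCast]

lemma sqrt_um_le (u : ℝ) : Real.sqrt (u - u^2) ≤ 1/2 := by
  have h := Real.sqrt_le_sqrt (show u - u^2 ≤ (1/2:ℝ)^2 by nlinarith [sq_nonneg (u - 1/2)])
  rwa [Real.sqrt_sq (by norm_num : (0:ℝ) ≤ 1/2)] at h

lemma DAset_y_nonneg {p : ℝ × ℝ} (hp : p ∈ DAset) : 0 ≤ p.2 := by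
  rcases hp with ⟨_, h⟩ | ⟨n, j, _, _, _, _, h⟩
  · simp only [Set.mem_singleton_iff] at h
    rw [h]
  · exact h

/-- The base-arc inclusion `unitInterval → 𝔻`. -/
def basePt (t : unitInterval) : DAset :=
  ⟨((t : ℝ), 0), Or.inl ⟨⟨t.2.1, t.2.2⟩, rfl⟩⟩

lemma continuous_basePt : Continuous basePt := by
  apply Continuous.subtype_mk
  fun_prop

lemma loopClass_self {X : Type u} [TopologicalSpace X] {x₀ x : X} (p : Path x₀ x) :
    loopClass (p.trans p.symm) = 1 := by
  show homOf (p.trans p.symm) = 𝟙 _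
  rw [homOf_trans, homOf_symm, Groupoid.inv_eq_inv]
  simp

lemma cast_trans_symm {Y : Type u} [TopologicalSpace Y] {a b x₀ : Y}
    (p q : Path a b) (h : a = x₀) :
    (p.trans q.symm).cast h.symm h.symm = (p.cast h.symm rfl).trans ((q.cast h.symm rfl)).symm := by
  ext t
  show (p.trans q.symm) t = _
  rw [Path.trans_apply, Path.trans_apply]
  split_ifs <;> rfl

end Helpers
section Geom

/-- The equation of the `(n,j)` dyadic circle. -/
def OnCeq (n j : ℕ) (p : ℝ × ℝ) : Prop :=
  (p.1 - (2*(j:ℝ)-1)/2^n)^2 + p.2^2 = (1/2^n)^2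

lemma pow_two_succ (n : ℕ) (hn : 0 < n) : (2:ℝ)^n = 2 * 2^(n-1) := by
  rw [← pow_succ']
  congr 1
  omega

lemma circle_x {n j : ℕ} (hn : 0 < n) (hj1 : 1 ≤ j) (hj2 : j ≤ 2^(n-1)) {p : ℝ × ℝ}
    (h : OnCeq n j p) :
    ((j:ℝ)-1)/2^(n-1) ≤ p.1 ∧ p.1 ≤ (j:ℝ)/2^(n-1) ∧ 0 ≤ p.1 ∧ p.1 ≤ 1 ∧
      p.2^2 ≤ (1/2^n)^2 := by
  rw [OnCeq] at h
  have h2n : (0:ℝ) < 2^n := by positivity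
  have h2n1 : (0:ℝ) < 2^(n-1) := by positivity
  have hp2 : (2:ℝ)^n = 2 * 2^(n-1) := pow_two_succ n hn
  have hsq : (p.1 - (2*(j:ℝ)-1)/2^n)^2 ≤ (1/2^n)^2 := by nlinarith [sq_nonneg p.2]
  have habs := abs_le.1 (abs_le_of_sq_le_sq hsq (by positivity))
  have hj1' : (1:ℝ) ≤ (j:ℝ) := by exact_mod_cast hj1
  have hj2' : (j:ℝ) ≤ 2^(n-1) := by
    have : ((2:ℝ))^(n-1) = ((2^(n-1) : ℕ) : ℝ) := by push_cast; ring
    rw [this]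
    exact_mod_cast hj2
  have hlo : ((j:ℝ)-1)/2^(n-1) ≤ p.1 := by
    rw [div_le_iff₀ h2n1]
    have h2' : (2*(j:ℝ)-1)/2^n - 1/2^n ≤ p.1 := by linarith [habs.1]
    have h1' : (2*(j:ℝ)-1) - 1 ≤ p.1 * 2^n := by
      calc (2*(j:ℝ)-1) - 1 = ((2*(j:ℝ)-1)/2^n - 1/2^n) * 2^n := by field_simp
      _ ≤ p.1 * 2^n := mul_le_mul_of_nonneg_right h2' (le_of_lt h2n)
    rw [hp2] at h1'
    ring_nf at h1' ⊢
    linarith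
  have hhi : p.1 ≤ (j:ℝ)/2^(n-1) := by
    rw [le_div_iff₀ h2n1]
    have h2' : p.1 ≤ (2*(j:ℝ)-1)/2^n + 1/2^n := by linarith [habs.2]
    have h1' : p.1 * 2^n ≤ (2*(j:ℝ)-1) + 1 := by
      calc p.1 * 2^n ≤ ((2*(j:ℝ)-1)/2^n + 1/2^n) * 2^n :=
            mul_le_mul_of_nonneg_right h2' (le_of_lt h2n)
      _ = (2*(j:ℝ)-1) + 1 := by field_simp
    rw [hp2] at h1'
    ring_nf at h1' ⊢
    linarith
  refine ⟨hlo, hhi, ?_, ?_, by nlinarith [sq_nonneg (p.1 - (2*(j:ℝ)-1)/2^n)]⟩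
  · refine le_trans ?_ hlo
    apply div_nonneg _ (le_of_lt h2n1)
    linarith
  · refine le_trans hhi ?_
    rw [div_le_one h2n1]
    exact hj2'

lemma DAset_x {p : ℝ × ℝ} (hp : p ∈ DAset) : 0 ≤ p.1 ∧ p.1 ≤ 1 := by
  rcases hp with ⟨h1, _⟩ | ⟨n, j, hn, hj1, hj2, h, _⟩
  · exact ⟨h1.1, h1.2⟩
  · exact ⟨(circle_x hn hj1 hj2 h).2.2.1, (circle_x hn hj1 hj2 h).2.2.2.1⟩

lemma DAset_circle {p : ℝ × ℝ} (hp : p ∈ DAset) (hy : p.2 ≠ 0) :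
    ∃ n j : ℕ, 0 < n ∧ 1 ≤ j ∧ j ≤ 2^(n-1) ∧ OnCeq n j p := by
  rcases hp with ⟨_, h2⟩ | ⟨n, j, hn, hj1, hj2, h, _⟩
  · exact absurd h2 hy
  · exact ⟨n, j, hn, hj1, hj2, h⟩

lemma circles_cross_aux {y v r r' e : ℝ} (hy2 : 0 < y^2)
    (h2 : v^2 + y^2 = r'^2) (h3 : 2*v*e + e^2 = r^2 - r'^2)
    (he : e^2 ≤ (r - r')^2) (hr' : 0 < r') (hrr : r' < r) : False := by
  have hrr' : 0 < r - r' := sub_pos.2 hrr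
  have hv2 : v^2 < r'^2 := by nlinarith
  have he2 : e^2 ≤ r^2 - 2*r*r' + r'^2 := by nlinarith [he]
  have hA : 2*r'*(r - r') ≤ 2*v*e := by nlinarith [h3, he2]
  have he0 : 0 < e^2 := by
    rcases eq_or_ne e 0 with h0 | h0
    · rw [h0] at h3
      nlinarith [h3]
    · positivity
  have hB1 : v^2*e^2 < r'^2*e^2 := by nlinarith [hv2, he0]
  have hB2 : r'^2*e^2 ≤ r'^2*(r-r')^2 := mul_le_mul_of_nonneg_left he (sq_nonneg r')
  have hApos : (0:ℝ) < 2*r'*(r-r') := by positivity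
  have hA2 : (2*r'*(r-r'))^2 ≤ (2*v*e)^2 := pow_le_pow_left₀ (le_of_lt hApos) hA 2
  nlinarith [hA2, hB1, hB2]

lemma circle_lt_false {n j n' j' : ℕ} (hn : 0 < n) (hnn' : n < n') {p : ℝ × ℝ}
    (hy : p.2 ≠ 0) (h : OnCeq n j p) (h' : OnCeq n' j' p) : False := by
  have hy2 : 0 < p.2^2 := by positivity
  set r : ℝ := 1/2^n with hr
  set r' : ℝ := 1/2^n' with hr'
  set c : ℝ := (2*(j:ℝ)-1)/2^n with hc
  set c' : ℝ := (2*(j':ℝ)-1)/2^n' with hc'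
  have hrpos : 0 < r := by rw [hr]; positivity
  have hr'pos : 0 < r' := by rw [hr']; positivity
  have hrr : r' < r := by
    rw [hr, hr']
    apply div_lt_div_of_pos_left one_pos (by positivity)
    exact pow_lt_pow_right₀ (by norm_num) hnn'
  set u : ℝ := p.1 - c with hu
  set v : ℝ := p.1 - c' with hv
  rw [OnCeq] at h h'
  have h1 : u^2 + p.2^2 = r^2 := h
  have h2 : v^2 + p.2^2 = r'^2 := h'
  have huv : u = v + (c' - c) := by rw [hu, hv]; ring
  set e : ℝ := c' - c with he
  have h3 : 2*v*e + e^2 = r^2 - r'^2 := by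
    linear_combination h1 - h2 - (u + v + e) * huv
  -- |u| < r, |v| < r'
  have hule : u^2 < r^2 := by linarith [h1, hy2]
  have hvle : v^2 < r'^2 := by linarith [h2, hy2]
  have huabs : |u| < r := abs_lt_of_sq_lt_sq hule (le_of_lt hrpos)
  have hvabs : |v| < r' := abs_lt_of_sq_lt_sq hvle (le_of_lt hr'pos)
  have he_eq : e = u - v := by rw [huv]; ring
  have heabs : |e| < r + r' := by
    rw [he_eq]
    exact lt_of_le_of_lt (abs_sub _ _) (add_lt_add huabs hvabs)
  -- integrality
  set k : ℕ := n' - n with hk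
  have hk1 : 1 ≤ k := by omega
  have hnk : n' = n + k := by omega
  set a : ℤ := (2*(j':ℤ)-1) - (2*(j:ℤ)-1) * 2^k with ha
  have h2n' : (0:ℝ) < 2^n' := by positivity
  have hea : e * 2^n' = (a:ℝ) := by
    rw [he, hc, hc', ha]
    push_cast
    rw [hnk, pow_add]
    field_simp
  have haabs : |a| < 2^k + 1 := by
    have h1' : |(a:ℝ)| < 2^k + 1 := by
      rw [← hea, abs_mul, abs_of_pos h2n']
      calc |e| * 2^n' < (r + r') * 2^n' := by
            apply mul_lt_mul_of_pos_right heabs h2n'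
      _ = 2^k + 1 := by
            rw [hr, hr', hnk, pow_add]
            field_simp
    have : ((|a| : ℤ) : ℝ) < ((2^k + 1 : ℤ) : ℝ) := by push_cast [Int.cast_abs] at h1' ⊢; exact h1'
    exact_mod_cast this
  have h2k : (2:ℤ)^k = 2 * 2^(k-1) := by
    rw [← pow_succ']
    congr 1
    omega
  have haodd : Odd a := by
    rw [ha]
    exact ⟨(j':ℤ) - 1 - (2*(j:ℤ)-1) * 2^(k-1), by rw [h2k]; ring⟩
  have hane : a ≠ 2^k ∧ a ≠ -(2^k) := by
    constructor <;> intro hcon <;> rw [hcon] at haodd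
    · exact (Int.not_odd_iff_even.2 ⟨2^(k-1), by rw [h2k]; ring⟩) haodd
    · exact (Int.not_odd_iff_even.2 ⟨-2^(k-1), by rw [h2k]; ring⟩) haodd
  have haabs' : |a| ≤ 2^k - 1 := by
    have h1' := abs_le.1 (Int.lt_add_one_iff.mp haabs)
    rw [abs_le]
    obtain ⟨hane1, hane2⟩ := hane
    obtain ⟨h1a, h1b⟩ := h1'
    generalize hBg : (2:ℤ)^k = B at hane1 hane2 h1a h1b ⊢
    omega
  have he' : e^2 ≤ (r - r')^2 := by
    have h1' : |e| ≤ r - r' := by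
      have hB : ((2:ℤ)^k - 1 : ℤ) = ((2:ℝ)^k - 1 : ℝ) := by push_cast; ring
      have h2' : |(a:ℝ)| ≤ (2:ℝ)^k - 1 := by exact_mod_cast haabs'
      have h3' : |e| * 2^n' ≤ (2:ℝ)^k - 1 := by
        rw [← abs_of_pos h2n', ← abs_mul, hea]
        exact h2'
      have h4' : (r - r') * 2^n' = (2:ℝ)^k - 1 := by
        rw [hr, hr', hnk, pow_add]
        field_simp
      rw [← h4'] at h3'
      exact le_of_mul_le_mul_right h3' h2n'
    have h2' := abs_le.1 h1'
    nlinarith [h2'.1, h2'.2]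
  exact circles_cross_aux hy2 h2 h3 he' hr'pos hrr

lemma circle_unique {n j n' j' : ℕ} (hn : 0 < n) (hn' : 0 < n')
    (hj1 : 1 ≤ j) (hj1' : 1 ≤ j') {p : ℝ × ℝ} (hy : p.2 ≠ 0)
    (h : OnCeq n j p) (h' : OnCeq n' j' p) : n = n' ∧ j = j' := by
  have hnn : n = n' := by
    rcases lt_trichotomy n n' with hlt | heq | hgt
    · exact absurd (circle_lt_false hn hlt hy h h') not_false
    · exact heq
    · exact absurd (circle_lt_false hn' hgt hy h' h) not_false
  subst hnn
  refine ⟨rfl, ?_⟩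
  -- same level: centers must coincide
  by_contra hjj
  have hy2 : 0 < p.2^2 := by positivity
  have h2n : (0:ℝ) < 2^n := by positivity
  set c : ℝ := (2*(j:ℝ)-1)/2^n with hc
  set c' : ℝ := (2*(j':ℝ)-1)/2^n with hc'
  have hu2 : (p.1 - c)^2 < (1/2^n)^2 := by
    have := h
    rw [OnCeq] at this
    nlinarith
  have hv2 : (p.1 - c')^2 < (1/2^n)^2 := by
    have := h'
    rw [OnCeq] at this
    nlinarith
  have huabs : |p.1 - c| < 1/2^n := abs_lt_of_sq_lt_sq hu2 (by positivity)
  have hvabs : |p.1 - c'| < 1/2^n := abs_lt_of_sq_lt_sq hv2 (by positivity)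
  have hcc : |c - c'| < 2/2^n := by
    calc |c - c'| = |(p.1 - c') - (p.1 - c)| := by congr 1; ring
    _ ≤ |p.1 - c'| + |p.1 - c| := abs_sub _ _
    _ < 1/2^n + 1/2^n := add_lt_add hvabs huabs
    _ = 2/2^n := by ring
  have hccval : |c - c'| = 2 * |(j:ℝ) - (j':ℝ)| / 2^n := by
    rw [hc, hc', div_sub_div_same, abs_div, abs_of_pos h2n]
    congr 1
    rw [show (2*(j:ℝ)-1) - (2*(j':ℝ)-1) = 2 * ((j:ℝ) - (j':ℝ)) by ring, abs_mul]
    norm_num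
  have hjj1 : (1:ℝ) ≤ |(j:ℝ) - (j':ℝ)| := by
    have h1' : (j:ℤ) ≠ (j':ℤ) := by exact_mod_cast hjj
    have h2' : 1 ≤ |(j:ℤ) - (j':ℤ)| := Int.one_le_abs (sub_ne_zero.2 h1')
    exact_mod_cast h2'
  rw [hccval] at hcc
  rw [div_lt_div_iff_of_pos_right h2n] at hcc
  linarith

end Geom
section Geom2

lemma fract_sub_sq_nonneg (x : ℝ) : 0 ≤ Int.fract x - Int.fract x ^ 2 := by
  have h1 := Int.fract_nonneg x
  have h2 := le_of_lt (Int.fract_lt_one x)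
  nlinarith

/-- If the fractional part is nonzero, the point of `λ_n` at `t` lies on a dyadic circle. -/
lemma dlf_mem_circle {n : ℕ} (hn : 0 < n) {t : ℝ} (h0 : 0 ≤ t) (h1 : t ≤ 1)
    (hy : Int.fract (2^(n-1) * t) ≠ 0) :
    ∃ j : ℕ, 1 ≤ j ∧ j ≤ 2^(n-1) ∧ OnCeq n j (dyadicLevelFun n t) := by
  have h2n1 : (0:ℝ) < 2^(n-1) := by positivity
  set m : ℤ := ⌊(2:ℝ)^(n-1) * t⌋ with hm
  have hm0 : 0 ≤ m := Int.floor_nonneg.2 (by positivity)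
  have hfl : (m:ℝ) + Int.fract ((2:ℝ)^(n-1) * t) = 2^(n-1)*t := Int.floor_add_fract _
  have ht1 : t < 1 := by
    rcases lt_or_eq_of_le h1 with h | h
    · exact h
    · exfalso
      apply hy
      rw [h, mul_one]
      have h2 : ((2:ℝ)^(n-1)) = (((2^(n-1) : ℕ)):ℝ) := by push_cast; ring
      rw [h2, Int.fract_natCast]
  have hmlt : m < (2^(n-1) : ℤ) := by
    rw [hm]
    apply Int.floor_lt.2
    push_cast
    nlinarith
  refine ⟨m.toNat + 1, by omega, ?_, ?_⟩
  · have h2 : (m.toNat : ℤ) = m := Int.toNat_of_nonneg hm0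
    have h3 : ((2^(n-1) : ℕ) : ℤ) = (2^(n-1) : ℤ) := by push_cast; ring
    omega
  · rw [OnCeq]
    have hcast : ((m.toNat + 1 : ℕ) : ℝ) = (m:ℝ) + 1 := by
      have h2 : ((m.toNat : ℕ) : ℝ) = (m:ℝ) := by exact_mod_cast Int.toNat_of_nonneg hm0
      push_cast
      rw [h2]
    show (t - (2*((m.toNat + 1 : ℕ):ℝ)-1)/2^n)^2
        + (Real.sqrt (Int.fract ((2:ℝ)^(n-1) * t) - Int.fract ((2:ℝ)^(n-1) * t)^2) / 2^(n-1))^2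
        = (1/2^n)^2
    rw [hcast, div_pow, Real.sq_sqrt (fract_sub_sq_nonneg _), pow_two_succ n hn]
    generalize hG : Int.fract ((2:ℝ)^(n-1) * t) = u at hfl ⊢
    rw [show u = 2^(n-1)*t - (m:ℝ) by linarith]
    field_simp
    ring

/-- If the fractional part is zero, `t` is a level-`n` dyadic point. -/
lemma dlf_dyadic {n : ℕ} {t : ℝ} (h0 : 0 ≤ t) (h1 : t ≤ 1)
    (hy : Int.fract (2^(n-1) * t) = 0) :
    ∃ i : ℕ, i ≤ 2^(n-1) ∧ t = (i:ℝ)/2^(n-1) := by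
  have h2n1 : (0:ℝ) < 2^(n-1) := by positivity
  set m : ℤ := ⌊(2:ℝ)^(n-1) * t⌋ with hm
  have hm0 : 0 ≤ m := Int.floor_nonneg.2 (by positivity)
  have hfr : (2:ℝ)^(n-1) * t = (m:ℝ) := by
    have := Int.fract_add_floor ((2:ℝ)^(n-1) * t)
    rw [hy] at this
    linarith [this]
  have hmle : m ≤ (2^(n-1) : ℤ) := by
    have : (m:ℝ) ≤ ((2^(n-1):ℤ):ℝ) := by push_cast; nlinarith
    exact_mod_cast this
  refine ⟨m.toNat, ?_, ?_⟩
  · have h2 : (m.toNat : ℤ) = m := Int.toNat_of_nonneg hm0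
    have h3 : ((2^(n-1) : ℕ) : ℤ) = (2^(n-1) : ℤ) := by push_cast; ring
    omega
  · rw [eq_div_iff (ne_of_gt h2n1)]
    have : ((m.toNat : ℕ) : ℝ) = (m:ℝ) := by exact_mod_cast Int.toNat_of_nonneg hm0
    rw [this]
    linarith [hfr]

/-- A point of a dyadic circle on the axis is an endpoint. -/
lemma circle_axis_dyadic {n j : ℕ} (hn : 0 < n) (hj1 : 1 ≤ j) (hj2 : j ≤ 2^(n-1))
    {p : ℝ × ℝ} (h : OnCeq n j p) (hy : p.2 = 0) :
    ∃ i : ℕ, i ≤ 2^(n-1) ∧ p.1 = (i:ℝ)/2^(n-1) := by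
  have h2n : (0:ℝ) < 2^n := by positivity
  have h2n1 : (0:ℝ) < 2^(n-1) := by positivity
  have hp2 : (2:ℝ)^n = 2 * 2^(n-1) := pow_two_succ n hn
  rw [OnCeq, hy] at h
  have hfac : (p.1 - (2*(j:ℝ)-1)/2^n - 1/2^n) * (p.1 - (2*(j:ℝ)-1)/2^n + 1/2^n) = 0 := by
    nlinarith [h]
  rcases mul_eq_zero.1 hfac with h' | h'
  · refine ⟨j, hj2, ?_⟩
    have : p.1 = (2*(j:ℝ)-1)/2^n + 1/2^n := by linarith
    rw [this, hp2]
    field_simp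
    ring
  · refine ⟨j - 1, by omega, ?_⟩
    have hc : ((j - 1 : ℕ) : ℝ) = (j:ℝ) - 1 := by
      have : (1:ℕ) ≤ j := hj1
      push_cast [this]
      ring
    have : p.1 = (2*(j:ℝ)-1)/2^n - 1/2^n := by linarith
    rw [this, hp2, hc]
    field_simp
    ring

/-- Height bound on dyadic circles. -/
lemma circle_height {n j : ℕ} {p : ℝ × ℝ} (h : OnCeq n j p) (hy : 0 ≤ p.2) :
    p.2 ≤ 1/2^n := by
  rw [OnCeq] at h
  have := abs_le_of_sq_le_sq (show p.2^2 ≤ (1/2^n)^2 by nlinarith [sq_nonneg (p.1 - (2*(j:ℝ)-1)/2^n)]) (by positivity)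
  rwa [abs_of_nonneg hy] at this

/-- The coordinates of `dyadicLevelFun`. -/
lemma dlf_fst (n : ℕ) (t : ℝ) : (dyadicLevelFun n t).1 = t := rfl

lemma dlf_snd_eq_zero {n : ℕ} {t : ℝ} (hy : Int.fract (2^(n-1) * t) = 0) :
    (dyadicLevelFun n t).2 = 0 := by
  show Real.sqrt _ / _ = 0
  rw [hy]
  norm_num

lemma dlf_snd_ne_zero {n : ℕ} {t : ℝ} (hy : Int.fract (2^(n-1) * t) ≠ 0) :
    (dyadicLevelFun n t).2 ≠ 0 := by
  show Real.sqrt _ / _ ≠ 0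
  have h2n1 : (0:ℝ) < 2^(n-1) := by positivity
  have h1 := Int.fract_nonneg ((2:ℝ)^(n-1) * t)
  have h2 := Int.fract_lt_one ((2:ℝ)^(n-1) * t)
  have hpos : 0 < Int.fract ((2:ℝ)^(n-1) * t) - Int.fract ((2:ℝ)^(n-1) * t) ^ 2 := by
    rcases lt_or_eq_of_le h1 with h | h
    · nlinarith
    · exact absurd h.symm hy
  positivity

end Geom2
section Tube

lemma exists_pos_le_on_finite {ι : Type u} {F : Set ι} (hF : F.Finite) (e : ι → ℝ)
    (he : ∀ s, 0 < e s) : ∃ ε > 0, ∀ s ∈ F, ε ≤ e s := by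
  classical
  rcases hF.toFinset.eq_empty_or_nonempty with h | h
  · exact ⟨1, one_pos, fun s hs => absurd ((Set.Finite.mem_toFinset hF).2 hs)
      (by rw [h]; simp)⟩
  · refine ⟨hF.toFinset.inf' h e, ?_, ?_⟩
    · rw [gt_iff_lt, Finset.lt_inf'_iff]
      exact fun i _ => he i
    · exact fun s hs => Finset.inf'_le e ((Set.Finite.mem_toFinset hF).2 hs)

lemma exists_dyadic_index {t : ℝ} (h0 : 0 ≤ t) (h1 : t ≤ 1) (n : ℕ) :
    ∃ j : ℕ, 1 ≤ j ∧ j ≤ 2^(n-1) ∧ ((j:ℝ)-1)/2^(n-1) ≤ t ∧ t ≤ (j:ℝ)/2^(n-1) := by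
  have h2n1 : (0:ℝ) < 2^(n-1) := by positivity
  set m : ℤ := ⌊t * 2^(n-1)⌋ with hm
  have hm0 : 0 ≤ m := Int.floor_nonneg.2 (by positivity)
  have hfloor : (m:ℝ) ≤ t * 2^(n-1) := Int.floor_le _
  have hceil : t * 2^(n-1) < (m:ℝ) + 1 := by
    have := Int.lt_floor_add_one (t * 2^(n-1))
    push_cast at this ⊢
    linarith
  by_cases hc : (2^(n-1):ℤ) ≤ m
  · refine ⟨2^(n-1), Nat.one_le_two_pow, le_refl _, ?_, ?_⟩
    · have ht1 : (1:ℝ) ≤ t := by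
        have h2 : ((2^(n-1):ℤ):ℝ) ≤ (m:ℝ) := by exact_mod_cast hc
        have h3 : ((2^(n-1):ℤ):ℝ) = (2:ℝ)^(n-1) := by push_cast; ring
        nlinarith
      have h4 : (((2^(n-1):ℕ)):ℝ) = (2:ℝ)^(n-1) := by push_cast; ring
      rw [h4, div_le_iff₀ h2n1]
      nlinarith
    · have h4 : (((2^(n-1):ℕ)):ℝ) = (2:ℝ)^(n-1) := by push_cast; ring
      rw [h4, le_div_iff₀ h2n1]
      nlinarith
  · refine ⟨m.toNat + 1, by omega, ?_, ?_, ?_⟩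
    · have h2 : (m.toNat : ℤ) = m := Int.toNat_of_nonneg hm0
      have h3 : ((2^(n-1) : ℕ) : ℤ) = (2^(n-1) : ℤ) := by push_cast; ring
      omega
    · have hcast : ((m.toNat + 1 : ℕ) : ℝ) = (m:ℝ) + 1 := by
        have h2 : ((m.toNat : ℕ) : ℝ) = (m:ℝ) := by exact_mod_cast Int.toNat_of_nonneg hm0
        push_cast
        rw [h2]
      rw [hcast, div_le_iff₀ h2n1]
      linarith
    · have hcast : ((m.toNat + 1 : ℕ) : ℝ) = (m:ℝ) + 1 := by
        have h2 : ((m.toNat : ℕ) : ℝ) = (m:ℝ) := by exact_mod_cast Int.toNat_of_nonneg hm0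
        push_cast
        rw [h2]
      rw [hcast, le_div_iff₀ h2n1]
      linarith

lemma dyadic_lift {k N : ℕ} (j : ℕ) (hk : 0 < k) (hkN : k ≤ N) :
    ((j * 2^(N-k) : ℕ):ℝ)/2^(N-1) = (j:ℝ)/2^(k-1) := by
  have h2 : (2:ℝ)^(N-1) = 2^(N-k) * 2^(k-1) := by
    rw [← pow_add]
    congr 1
    omega
  push_cast
  rw [h2]
  have hne1 : ((2:ℝ)^(N-k)) ≠ 0 := by positivity
  have hne2 : ((2:ℝ)^(k-1)) ≠ 0 := by positivity
  field_simp

lemma dyadic_lift_le {k N : ℕ} {j : ℕ} (hk : 0 < k) (hkN : k ≤ N) (hj : j ≤ 2^(k-1)) :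
    j * 2^(N-k) ≤ 2^(N-1) := by
  calc j * 2^(N-k) ≤ 2^(k-1) * 2^(N-k) := Nat.mul_le_mul_right _ hj
  _ = 2^(N-1) := by
      rw [← pow_add]
      congr 1
      omega

/-- Every neighborhood of a path in the compact-open topology contains a dyadic tube
neighborhood, of arbitrarily high level. -/
lemma tube_basis {X : Type} [TopologicalSpace X] {x₀ x : X} (α : Path x₀ x)
    {V : Set C(unitInterval, X)} (hV : V ∈ nhds (α : C(unitInterval, X))) (n₀ : ℕ) :
    ∃ n : ℕ, n₀ < n ∧ ∃ U : ℕ → Set X,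
      (∀ j : ℕ, 1 ≤ j → j ≤ 2^(n-1) → IsOpen (U j)) ∧
      (∀ j : ℕ, 1 ≤ j → j ≤ 2^(n-1) → ∀ t : ℝ, ((j:ℝ)-1)/2^(n-1) ≤ t →
        t ≤ (j:ℝ)/2^(n-1) → α.extend t ∈ U j) ∧
      (∀ γ : Path x₀ x, (∀ j : ℕ, 1 ≤ j → j ≤ 2^(n-1) → ∀ t : ℝ, ((j:ℝ)-1)/2^(n-1) ≤ t →
        t ≤ (j:ℝ)/2^(n-1) → γ.extend t ∈ U j) → (γ : C(unitInterval, X)) ∈ V) := by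
  classical
  have hbasis := TopologicalSpace.isTopologicalBasis_of_subbasis
    (ContinuousMap.compactOpen_eq (X := unitInterval) (Y := X))
  rw [hbasis.mem_nhds_iff] at hV
  obtain ⟨T, ⟨F, ⟨hFfin, hFsub⟩, rfl⟩, hαT, hTV⟩ := hV
  -- choose (K,U) for each member of F
  have hKUex : ∀ s : Set C(unitInterval, X), ∃ KU : Set unitInterval × Set X,
      s ∈ F → IsCompact KU.1 ∧ IsOpen KU.2 ∧ s = {g : C(unitInterval, X) | Set.MapsTo (⇑g) KU.1 KU.2} := by
    intro s
    by_cases hs : s ∈ F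
    · obtain ⟨K, hK, W, hW, hsEq⟩ := hFsub hs
      exact ⟨(K, W), fun _ => ⟨hK, hW, hsEq.symm⟩⟩
    · exact ⟨(∅, ∅), fun h => absurd h hs⟩
  choose KU hKU using hKUex
  have hαmem : ∀ s ∈ F, Set.MapsTo (⇑(α : C(unitInterval, X))) (KU s).1 (KU s).2 := by
    intro s hs
    have h1 : (α : C(unitInterval, X)) ∈ s := hαT s hs
    rwa [(hKU s hs).2.2] at h1
  -- epsilon for each member of F
  have hepsEx : ∀ s : Set C(unitInterval, X), ∃ ε, 0 < ε ∧ (s ∈ F →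
      ∀ p q : unitInterval, q ∈ (KU s).1 → dist p q < ε →
        (α : C(unitInterval, X)) p ∈ (KU s).2) := by
    intro s
    by_cases hs : s ∈ F
    · obtain ⟨hKc, hUo, _⟩ := hKU s hs
      have hsub : (KU s).1 ⊆ (⇑(α : C(unitInterval, X))) ⁻¹' (KU s).2 :=
        fun q hq => hαmem s hs hq
      obtain ⟨ε, hε, hp⟩ := exists_eps hKc (hUo.preimage (map_continuous _)) hsub
      exact ⟨ε, hε, fun _ p q hq hd => hp p q hq hd⟩
    · exact ⟨1, one_pos, fun h => absurd h hs⟩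
  choose eps hepspos hepsP using hepsEx
  obtain ⟨ε, hε, hεle⟩ := exists_pos_le_on_finite hFfin eps hepspos
  obtain ⟨M, hM⟩ := exists_pow_lt_of_lt_one hε (by norm_num : (1/2:ℝ) < 1)
  refine ⟨max (n₀+1) (M+1), lt_of_lt_of_le (Nat.lt_succ_self n₀) (le_max_left _ _), ?_⟩
  set n : ℕ := max (n₀+1) (M+1) with hn
  have hn1 : 0 < n := lt_of_lt_of_le (Nat.succ_pos n₀) (le_max_left _ _)
  have h2n1 : (0:ℝ) < 2^(n-1) := by positivity
  have hlen : (1:ℝ)/2^(n-1) < ε := by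
    have h1 : (1:ℝ)/2^(n-1) = (1/2:ℝ)^(n-1) := by
      rw [div_pow, one_pow]
    rw [h1]
    refine lt_of_le_of_lt ?_ hM
    apply pow_le_pow_of_le_one (by norm_num) (by norm_num)
    have : M + 1 ≤ n := le_max_right _ _
    omega
  -- the dyadic tube
  set Sel : ℕ → Set (Set C(unitInterval, X)) := fun j =>
    {s ∈ F | ∃ q ∈ (KU s).1, ((j:ℝ)-1)/2^(n-1) ≤ (q:ℝ) ∧ (q:ℝ) ≤ (j:ℝ)/2^(n-1)} with hSel
  refine ⟨fun j => ⋂ s ∈ Sel j, (KU s).2, ?_, ?_, ?_⟩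
  · intro j _ _
    refine Set.Finite.isOpen_biInter (hFfin.subset (Set.sep_subset _ _)) ?_
    intro s hs
    exact (hKU s hs.1).2.1
  · intro j hj1 hj2 t ht1 ht2
    have ht0 : (0:ℝ) ≤ t := by
      refine le_trans ?_ ht1
      apply div_nonneg _ (le_of_lt h2n1)
      have : (1:ℝ) ≤ (j:ℝ) := by exact_mod_cast hj1
      linarith
    have htone : t ≤ 1 := by
      refine le_trans ht2 ?_
      rw [div_le_one h2n1]
      have : ((j:ℝ)) ≤ (((2^(n-1):ℕ)):ℝ) := by exact_mod_cast hj2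
      calc (j:ℝ) ≤ (((2^(n-1):ℕ)):ℝ) := this
      _ = 2^(n-1) := by push_cast; ring
    rw [Set.mem_iInter₂]
    rintro s ⟨hsF, q, hqK, hq1, hq2⟩
    have hdist : dist (⟨t, ht0, htone⟩ : unitInterval) q < eps s := by
      rw [Subtype.dist_eq, Real.dist_eq]
      have hval : ((⟨t, ht0, htone⟩ : unitInterval) : ℝ) = t := rfl
      rw [hval]
      refine lt_of_le_of_lt ?_ (lt_of_lt_of_le hlen (hεle s hsF))
      rw [abs_le]
      have e1 : ((j:ℝ)-1)/2^(n-1) = (j:ℝ)/2^(n-1) - 1/2^(n-1) := by ring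
      rw [e1] at hq1 ht1
      constructor <;> linarith [hq1, hq2, ht1, ht2]
    have := hepsP s hsF ⟨t, ht0, htone⟩ q hqK hdist
    rwa [show ((α : C(unitInterval, X)) ⟨t, ht0, htone⟩) = α.extend t by
      rw [Path.extend_apply α ⟨ht0, htone⟩]; rfl] at this
  · intro γ htube
    apply hTV
    intro s hs
    rw [(hKU s hs).2.2]
    intro q hqK
    obtain ⟨j, hj1, hj2, hq1, hq2⟩ := exists_dyadic_index q.2.1 q.2.2 n
    have hUsub : (⋂ s' ∈ Sel j, (KU s').2) ⊆ (KU s).2 := by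
      apply Set.biInter_subset_of_mem
      exact ⟨hs, q, hqK, hq1, hq2⟩
    have := htube j hj1 hj2 (q:ℝ) hq1 hq2
    rw [show γ.extend (q:ℝ) = (γ : C(unitInterval, X)) q by
      rw [Path.extend_apply γ ⟨q.2.1, q.2.2⟩]
      congr] at this
    exact hUsub this

end Tube
section Geom3

lemma isClosed_onCeq (a b : ℕ) : IsClosed {q : ℝ × ℝ | OnCeq a b q} := by
  have h : {q : ℝ × ℝ | OnCeq a b q}
      = {q : ℝ × ℝ | (q.1 - (2*(b:ℝ)-1)/2^a)^2 + q.2^2 = (1/2^a)^2} := rfl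
  rw [h]
  apply isClosed_eq _ continuous_const
  fun_prop

lemma offaxis_nbhd (p : DAset) (hy : (p : ℝ × ℝ).2 ≠ 0) {n j : ℕ} (hn : 0 < n)
    (hj1 : 1 ≤ j) (hj2 : j ≤ 2^(n-1)) (hC : OnCeq n j (p : ℝ × ℝ)) :
    ∃ δ > 0, ∀ q : DAset, dist q p < δ → (q : ℝ × ℝ).2 ≠ 0 ∧ OnCeq n j (q : ℝ × ℝ) := by
  classical
  have hy0 : 0 < (p : ℝ × ℝ).2 := lt_of_le_of_ne (DAset_y_nonneg p.2) (Ne.symm hy)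
  obtain ⟨M, hM⟩ := exists_pow_lt_of_lt_one
    (by linarith : (0:ℝ) < (p : ℝ × ℝ).2/2) (by norm_num : (1/2:ℝ) < 1)
  set T : Finset (ℕ×ℕ) := ((Finset.range (M+1)) ×ˢ (Finset.range (2^M+1))).filter
    (fun nj => 0 < nj.1 ∧ 1 ≤ nj.2 ∧ nj.2 ≤ 2^(nj.1-1) ∧ nj ≠ (n,j)) with hT
  set Cbad : Set (ℝ×ℝ) := ⋃ nj ∈ (↑T : Set (ℕ×ℕ)), {q : ℝ×ℝ | OnCeq nj.1 nj.2 q} with hCbad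
  have hclosed : IsClosed Cbad := by
    apply Set.Finite.isClosed_biUnion T.finite_toSet
    intro nj _
    exact isClosed_onCeq nj.1 nj.2
  have hpnot : (p : ℝ × ℝ) ∈ Cbadᶜ := by
    intro hmem
    rw [hCbad, Set.mem_iUnion₂] at hmem
    obtain ⟨nj, hnjT, hnjC⟩ := hmem
    rw [Finset.mem_coe, hT, Finset.mem_filter] at hnjT
    obtain ⟨-, h1, h2, h3, h4⟩ := hnjT
    have h5 := circle_unique h1 hn h2 hj1 hy hnjC hC
    exact h4 (Prod.ext h5.1 h5.2)
  obtain ⟨δ₁, hδ₁, hball⟩ := Metric.isOpen_iff.1 hclosed.isOpen_compl (p : ℝ × ℝ) hpnot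
  refine ⟨min δ₁ ((p : ℝ × ℝ).2/2), by positivity, ?_⟩
  intro q hq
  have hdv : dist (q : ℝ × ℝ) (p : ℝ × ℝ) < min δ₁ ((p : ℝ × ℝ).2/2) := by
    rwa [Subtype.dist_eq] at hq
  have hd2 : |(q : ℝ × ℝ).2 - (p : ℝ × ℝ).2| < (p : ℝ × ℝ).2/2 := by
    have h1 : dist (q : ℝ × ℝ).2 (p : ℝ × ℝ).2 ≤ dist (q : ℝ × ℝ) (p : ℝ × ℝ) := by
      rw [Prod.dist_eq]
      exact le_max_right _ _
    rw [Real.dist_eq] at h1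
    exact lt_of_le_of_lt h1 (lt_of_lt_of_le hdv (min_le_right _ _))
  have hq2pos : (p : ℝ × ℝ).2/2 < (q : ℝ × ℝ).2 := by
    rw [abs_lt] at hd2
    linarith
  have hqy : (q : ℝ × ℝ).2 ≠ 0 := by
    have : (0:ℝ) < (q : ℝ × ℝ).2 := by linarith
    exact this.ne'
  refine ⟨hqy, ?_⟩
  obtain ⟨n', j', hn', hj1', hj2', hC'⟩ := DAset_circle q.2 hqy
  have hn'le : n' ≤ M := by
    by_contra hgt
    have hh := circle_height hC' (DAset_y_nonneg q.2)
    have h1 : (1:ℝ)/2^n' ≤ (1/2:ℝ)^M := by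
      rw [show (1:ℝ)/2^n' = (1/2:ℝ)^n' by rw [div_pow, one_pow]]
      apply pow_le_pow_of_le_one (by norm_num) (by norm_num)
      omega
    linarith [hq2pos, hM, hh]
  by_cases heq : (n', j') = (n, j)
  · have h1 : n' = n := congrArg Prod.fst heq
    have h2 : j' = j := congrArg Prod.snd heq
    subst h1
    subst h2
    exact hC'
  · exfalso
    have hmem : (q : ℝ × ℝ) ∈ Cbad := by
      rw [hCbad, Set.mem_iUnion₂]
      refine ⟨(n', j'), ?_, hC'⟩
      rw [Finset.mem_coe, hT, Finset.mem_filter]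
      have hple : 2^(n'-1) ≤ 2^M := Nat.pow_le_pow_right (by norm_num) (by omega)
      refine ⟨Finset.mem_product.2 ⟨Finset.mem_range.2 (by omega),
        Finset.mem_range.2 (by omega)⟩, hn', hj1', hj2', heq⟩
    have h6 := hball (show (q : ℝ × ℝ) ∈ Metric.ball (p : ℝ × ℝ) δ₁ from by
      rw [Metric.mem_ball]
      exact lt_of_lt_of_le hdv (min_le_left _ _))
    exact h6 hmem

end Geom3
section Dir1

/-- value of `lam m` at a point of `[0,1]`, as coordinates. -/
lemma lam_val {lam : ℕ → Path dZero dOne} (hlam : LamSpec lam) {m : ℕ} (hm : 0 < m)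
    (t : unitInterval) :
    (↑((lam m) t) : ℝ × ℝ)
      = ((t:ℝ), Real.sqrt (Int.fract (2 ^ (m-1) * (t:ℝ))
          - Int.fract (2 ^ (m-1) * (t:ℝ)) ^ 2) / 2 ^ (m-1)) :=
  hlam m hm t

theorem dir1 {X : Type} [TopologicalSpace X] (x₀ : X)
    (H : Subgroup (FundamentalGroup X x₀))
    (lam : ℕ → Path dZero dOne) (hlam : LamSpec lam)
    (hHPH : HomotopicallyPathHausdorffRel x₀ H) :
    IsTGClosed dZero (SSub lam) (dInfOf lam) x₀ H := by
  intro f hf hmap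
  set x₁ : X := f dOne with hx₁
  -- the mapped level paths, re-based at x₀
  set Λ : ℕ → Path x₀ x₁ := fun n => ((lam n).map f.continuous).cast hf.symm rfl with hΛ
  set A : Path x₀ x₁ := (lamInfPath.map f.continuous).cast hf.symm rfl with hA
  -- images of the generators lie in H
  have hgen : ∀ n : ℕ, 0 < n → loopClass ((Λ n).trans (Λ (n+1)).symm) ∈ H := by
    intro n hn
    have h1 : loopClass ((lam n).trans (lam (n+1)).symm) ∈ SSub lam :=
      Subgroup.subset_closure ⟨n, hn, rfl⟩
    have h2 := hmap (Subgroup.mem_map_of_mem (inducedHom f dZero hf) h1)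
    rw [inducedHom_loopClass] at h2
    rwa [show ((((lam n).trans (lam (n+1)).symm).map f.continuous).cast hf.symm hf.symm)
        = (Λ n).trans (Λ (n+1)).symm by
      rw [hΛ]
      rw [Path.map_trans _ _ f.continuous, ← Path.map_symm]
      exact cast_trans_symm _ _ hf] at h2
  -- telescoping
  have htel : ∀ m : ℕ, 1 ≤ m → loopClass ((Λ 1).trans (Λ m).symm) ∈ H := by
    intro m hm
    induction m, hm using Nat.le_induction with
    | base =>
      rw [loopClass_self]
      exact one_mem H
    | succ m hm ih =>
      rw [loopClass_coset_mul (Λ 1) (Λ m) (Λ (m+1))]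
      exact mul_mem (hgen m hm) ih
  -- suppose the conclusion fails
  by_contra hcon
  have hgoal : loopClass ((Λ 1).trans A.symm) ∉ H := by
    intro hmem
    apply hcon
    show inducedHom f dZero hf (loopClass ((lam 1).trans lamInfPath.symm)) ∈ H
    rw [inducedHom_loopClass]
    rwa [show ((((lam 1).trans lamInfPath.symm).map f.continuous).cast hf.symm hf.symm)
        = (Λ 1).trans A.symm by
      rw [hΛ, hA]
      rw [Path.map_trans _ _ f.continuous, ← Path.map_symm]
      exact cast_trans_symm _ _ hf]
  have hAB : loopClass (A.trans (Λ 1).symm) ∉ H := by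
    intro hmem
    apply hgoal
    rw [← loopClass_coset_inv A (Λ 1)]
    exact inv_mem hmem
  -- A.extend values
  have hAval : ∀ (t : ℝ) (ht0 : 0 ≤ t) (ht1 : t ≤ 1), A.extend t = f (basePt ⟨t, ht0, ht1⟩) := by
    intro t ht0 ht1
    rw [Path.extend_apply A ⟨ht0, ht1⟩]
    rw [hA]
    show (lamInfPath.map f.continuous) _ = _
    rfl
  -- apply homotopical path Hausdorffness to the pair (A, Λ 1)
  obtain ⟨n, hn, U, hUopen, hUcov, hKey⟩ := hHPH x₁ A (Λ 1) hAB
  have h2n : (0:ℝ) < 2 ^ (n-1) := by positivity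
  -- choose ε j for each j
  have heps : ∀ j : ℕ, ∃ ε > 0, 1 ≤ j → j ≤ 2^(n-1) →
      ∀ p : DAset, (p : ℝ × ℝ).1 ∈ Set.Icc (((j:ℝ)-1)/2^(n-1)) ((j:ℝ)/2^(n-1)) →
        (p : ℝ × ℝ).2 < ε → f p ∈ U j := by
    intro j
    by_cases hj : 1 ≤ j ∧ j ≤ 2^(n-1)
    · obtain ⟨hj1, hj2⟩ := hj
      set K : Set DAset := basePt '' {t : unitInterval |
        (t:ℝ) ∈ Set.Icc (((j:ℝ)-1)/2^(n-1)) ((j:ℝ)/2^(n-1))} with hK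
      have hKc : IsCompact K := by
        apply IsCompact.image _ continuous_basePt
        apply IsCompact.of_isClosed_subset isCompact_univ _ (Set.subset_univ _)
        exact IsClosed.preimage continuous_subtype_val isClosed_Icc
      have hOopen : IsOpen (f ⁻¹' (U j)) := (hUopen j hj1 hj2).preimage f.continuous
      have hKO : K ⊆ f ⁻¹' (U j) := by
        rintro _ ⟨t, ht, rfl⟩
        have := hUcov j hj1 hj2 (t:ℝ) ht.1 ht.2
        rwa [hAval (t:ℝ) t.2.1 t.2.2] at this
      obtain ⟨ε, hε, hεp⟩ := exists_eps hKc hOopen hKO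
      refine ⟨ε, hε, fun _ _ p hp1 hp2 => ?_⟩
      have ht0 : (0:ℝ) ≤ (p : ℝ × ℝ).1 := by
        refine le_trans ?_ hp1.1
        apply div_nonneg _ (le_of_lt h2n)
        have : (1:ℝ) ≤ (j:ℝ) := by exact_mod_cast hj1
        linarith
      have ht1 : (p : ℝ × ℝ).1 ≤ 1 := by
        refine le_trans hp1.2 ?_
        rw [div_le_one h2n]
        exact_mod_cast hj2
      have hq : basePt ⟨(p : ℝ × ℝ).1, ht0, ht1⟩ ∈ K := ⟨⟨(p : ℝ × ℝ).1, ht0, ht1⟩, hp1, rfl⟩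
      refine hεp p _ hq ?_
      rw [Subtype.dist_eq, Prod.dist_eq]
      have hy0 : 0 ≤ (p : ℝ × ℝ).2 := DAset_y_nonneg p.2
      simp only [basePt]
      rw [Real.dist_eq, Real.dist_eq]
      rw [sub_self, abs_zero, sub_zero, abs_of_nonneg hy0]
      simp [hp2, hε]
    · exact ⟨1, one_pos, fun h1 h2 => absurd ⟨h1, h2⟩ hj⟩
  choose E hEpos hE using heps
  set εm : ℝ := (Finset.range (2^(n-1)+1)).inf' ⟨0, by simp⟩ E with hεm
  have hεmpos : 0 < εm := by
    rw [hεm]; apply (Finset.lt_inf'_iff _).2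
    exact fun i _ => hEpos i
  -- choose the level m
  obtain ⟨M, hM⟩ := exists_pow_lt_of_lt_one hεmpos (by norm_num : (1/2:ℝ) < 1)
  set m : ℕ := max n (M + 1) with hm
  have hm1 : 1 ≤ m := le_trans hn (le_max_left _ _)
  have hnm : n ≤ m := le_max_left _ _
  have h2m : (0:ℝ) < 2 ^ (m-1) := by positivity
  -- the candidate path γ = Λ m
  -- its extension values on [0,1]
  have hΛval : ∀ (t : ℝ) (ht0 : 0 ≤ t) (ht1 : t ≤ 1),
      (Λ m).extend t = f ((lam m) ⟨t, ht0, ht1⟩) := by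
    intro t ht0 ht1
    rw [Path.extend_apply (Λ m) ⟨ht0, ht1⟩]
    rfl
  -- height bound for points of λ m
  have hMm : M ≤ m := le_trans (Nat.le_succ M) (le_max_right n (M+1))
  have hht : ∀ t : unitInterval, (↑((lam m) t) : ℝ × ℝ).2 < εm := by
    intro t
    rw [lam_val hlam (lt_of_lt_of_le hn hnm) t]
    dsimp only
    have h1 : Real.sqrt (Int.fract (2 ^ (m-1) * (t:ℝ))
        - Int.fract (2 ^ (m-1) * (t:ℝ)) ^ 2) ≤ 1/2 := sqrt_um_le _
    have h2 : Real.sqrt (Int.fract (2 ^ (m-1) * (t:ℝ))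
        - Int.fract (2 ^ (m-1) * (t:ℝ)) ^ 2) / 2 ^ (m-1) ≤ (1/2:ℝ)^m := by
      rw [div_le_iff₀ h2m]
      calc Real.sqrt _ ≤ 1/2 := h1
      _ = (1/2:ℝ)^m * 2^(m-1) * 2 * (1/2) := by
          rw [div_pow, one_pow]
          have h3 : (2:ℝ)^m = 2^(m-1) * 2 := by
            rw [← pow_succ]
            congr 1
            omega
          field_simp [h3]
          rw [h3]; ring
      _ ≤ (1/2:ℝ)^m * 2^(m-1) := by nlinarith [pow_pos (by norm_num : (0:ℝ) < 1/2) m, h2m]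
    have h3 : ((1:ℝ)/2)^m ≤ (1/2)^M :=
      pow_le_pow_of_le_one (by norm_num) (by norm_num) hMm
    exact lt_of_le_of_lt (h2.trans h3) hM
  -- verify the two conditions of hKey for γ := Λ m
  have hcond1 : ∀ j : ℕ, 1 ≤ j → j ≤ 2 ^ (n - 1) → ∀ t : ℝ,
      ((j : ℝ) - 1) / 2 ^ (n - 1) ≤ t → t ≤ (j : ℝ) / 2 ^ (n - 1) →
      (Λ m).extend t ∈ U j := by
    intro j hj1 hj2 t ht1 ht2
    have ht0 : (0:ℝ) ≤ t := by
      refine le_trans ?_ ht1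
      apply div_nonneg _ (le_of_lt h2n)
      have : (1:ℝ) ≤ (j:ℝ) := by exact_mod_cast hj1
      linarith
    have htone : t ≤ 1 := by
      refine le_trans ht2 ?_
      rw [div_le_one h2n]
      exact_mod_cast hj2
    rw [hΛval t ht0 htone]
    set p : DAset := (lam m) ⟨t, ht0, htone⟩ with hp
    have hpv : (↑p : ℝ × ℝ).1 = t := by
      rw [hp, lam_val hlam (lt_of_lt_of_le hn hnm)]
    refine hE j hj1 hj2 p ?_ ?_
    · rw [hpv]
      exact ⟨ht1, ht2⟩
    · refine lt_of_lt_of_le (hht _) ?_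
      rw [hεm]
      apply Finset.inf'_le
      simp only [Finset.mem_range]
      omega
  have hcond2 : ∀ j : ℕ, j ≤ 2 ^ (n - 1) →
      (Λ m).extend ((j : ℝ) / 2 ^ (n - 1)) = A.extend ((j : ℝ) / 2 ^ (n - 1)) := by
    intro j hj
    have ht0 : (0:ℝ) ≤ (j : ℝ) / 2 ^ (n - 1) := div_nonneg (Nat.cast_nonneg j) (le_of_lt h2n)
    have ht1 : (j : ℝ) / 2 ^ (n - 1) ≤ 1 := by
      rw [div_le_one h2n]
      exact_mod_cast hj
    rw [hΛval _ ht0 ht1, hAval _ ht0 ht1]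
    refine congrArg f (Subtype.ext ?_)
    have hval : (↑((lam m) ⟨(j:ℝ)/2^(n-1), ht0, ht1⟩) : ℝ × ℝ)
        = (((j:ℝ)/2^(n-1) : ℝ), 0) := by
      rw [lam_val hlam (lt_of_lt_of_le hn hnm)]
      dsimp only
      rw [fract_dyadic hn hnm]
      norm_num
    rw [hval]
    rfl
  have := hKey (Λ m) hcond1 hcond2
  exact this (by
    rw [← loopClass_coset_inv (Λ 1) (Λ m)]
    exact inv_mem (htel m hm1))

end Dir1
section Dir2

theorem dir2 {X : Type} [TopologicalSpace X] (x₀ : X)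
    (H : Subgroup (FundamentalGroup X x₀))
    (lam : ℕ → Path dZero dOne) (hlam : LamSpec lam)
    (hfc : FirstCountableTopology C(unitInterval, X))
    (hcl : IsTGClosed dZero (SSub lam) (dInfOf lam) x₀ H) :
    HomotopicallyPathHausdorffRel x₀ H := by
  classical
  intro x α β hnotH
  by_contra hcon
  push_neg at hcon
  haveI := hfc
  obtain ⟨B, hB⟩ := (nhds (α : C(unitInterval, X))).exists_antitone_basis
  have hBmem : ∀ k : ℕ, B k ∈ nhds (α : C(unitInterval, X)) :=
    fun k => hB.toHasBasis.mem_of_mem trivial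
  -- the approximating sequence
  have hseq : ∀ k : ℕ, ∃ (g : Path x₀ x) (N : ℕ), k < N ∧
      ((g : C(unitInterval, X)) ∈ B k) ∧
      (∀ j : ℕ, j ≤ 2^(N-1) →
        g.extend ((j:ℝ)/2^(N-1)) = α.extend ((j:ℝ)/2^(N-1))) ∧
      loopClass (g.trans β.symm) ∈ H := by
    intro k
    obtain ⟨N, hkN, U, hUopen, hUcov, hUmem⟩ := tube_basis α (hBmem k) k
    obtain ⟨γ, hT, hG, hE⟩ := hcon N (by omega) U hUopen hUcov
    exact ⟨γ, N, hkN, hUmem γ hT, hG, hE⟩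
  choose Γ Nf hNf hΓB hΓagree hΓH using hseq
  -- agreement with α at all coarser dyadic points
  have hagree : ∀ k : ℕ, 0 < k → ∀ j : ℕ, j ≤ 2^(k-1) →
      (Γ k).extend ((j:ℝ)/2^(k-1)) = α.extend ((j:ℝ)/2^(k-1)) := by
    intro k hk j hj
    have h1 := hΓagree k (j * 2^(Nf k - k)) (dyadic_lift_le hk (le_of_lt (hNf k)) hj)
    rwa [dyadic_lift j hk (le_of_lt (hNf k))] at h1
  -- convergence of the sequence
  have hconv : ∀ V ∈ nhds (α : C(unitInterval, X)), ∃ k₀ : ℕ, ∀ k, k₀ ≤ k →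
      ((Γ k : C(unitInterval, X)) ∈ V) := by
    intro V hV
    obtain ⟨k₀, -, hk₀⟩ := hB.toHasBasis.mem_iff.1 hV
    exact ⟨k₀, fun k hk => hk₀ (hB.antitone hk (hΓB k))⟩
  have hext : ∀ (g : Path x₀ x) (t : ℝ) (h0 : 0 ≤ t) (h1 : t ≤ 1),
      g.extend t = g ⟨t, h0, h1⟩ := fun g t h0 h1 => Path.extend_apply g ⟨h0, h1⟩
  -- the level function and the map F0 : 𝔻 → X
  set lev : DAset → ℕ := fun p =>
    if h : ∃ nj : ℕ × ℕ, 0 < nj.1 ∧ 1 ≤ nj.2 ∧ nj.2 ≤ 2^(nj.1 - 1) ∧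
      OnCeq nj.1 nj.2 (p : ℝ × ℝ) then h.choose.1 else 0 with hlev
  set F0 : DAset → X := fun p =>
    if (p : ℝ × ℝ).2 = 0 then α.extend (p : ℝ × ℝ).1
    else (Γ (lev p)).extend (p : ℝ × ℝ).1 with hF0
  have hF0base : ∀ p : DAset, (p : ℝ × ℝ).2 = 0 → F0 p = α.extend (p : ℝ × ℝ).1 := by
    intro p hp
    rw [hF0]
    dsimp only
    rw [if_pos hp]
  have hlevSpec : ∀ (p : DAset) (n j : ℕ), (p : ℝ × ℝ).2 ≠ 0 → 0 < n → 1 ≤ j →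
      j ≤ 2^(n-1) → OnCeq n j (p : ℝ × ℝ) → lev p = n := by
    intro p n j hy hn hj1 hj2 hC
    have hex : ∃ nj : ℕ × ℕ, 0 < nj.1 ∧ 1 ≤ nj.2 ∧ nj.2 ≤ 2^(nj.1 - 1) ∧
        OnCeq nj.1 nj.2 (p : ℝ × ℝ) := ⟨(n, j), hn, hj1, hj2, hC⟩
    rw [hlev]
    dsimp only
    rw [dif_pos hex]
    obtain ⟨h1, h2, h3, h4⟩ := hex.choose_spec
    exact (circle_unique h1 hn h2 hj1 hy h4 hC).1
  have hF0circ : ∀ (p : DAset) (n j : ℕ), (p : ℝ × ℝ).2 ≠ 0 → 0 < n → 1 ≤ j →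
      j ≤ 2^(n-1) → OnCeq n j (p : ℝ × ℝ) → F0 p = (Γ n).extend (p : ℝ × ℝ).1 := by
    intro p n j hy hn hj1 hj2 hC
    rw [hF0]
    dsimp only
    rw [if_neg hy, hlevSpec p n j hy hn hj1 hj2 hC]
  -- continuity of F0
  have hcont : Continuous F0 := by
    rw [continuous_iff_continuousAt]
    intro p
    by_cases hy : (p : ℝ × ℝ).2 = 0
    · -- on the base arc
      have hx01 := DAset_x p.2
      intro W hW
      rw [hF0base p hy] at hW
      obtain ⟨W', hW'sub, hW'open, hW'mem⟩ := mem_nhds_iff.1 hW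
      have hcα : ContinuousAt α.extend (p : ℝ × ℝ).1 := α.continuous_extend.continuousAt
      have h1 : α.extend ⁻¹' W' ∈ nhds (p : ℝ × ℝ).1 := hcα (hW'open.mem_nhds hW'mem)
      obtain ⟨δ₀, hδ₀, hball₀⟩ := Metric.mem_nhds_iff.1 h1
      set K' : Set unitInterval := {s : unitInterval | |(s:ℝ) - (p : ℝ × ℝ).1| ≤ δ₀/2}
        with hK'
      have hK'c : IsCompact K' := IsClosed.isCompact
        (isClosed_le (by fun_prop) continuous_const)
      have hαK' : Set.MapsTo (⇑(α : C(unitInterval, X))) K' W' := by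
        intro s hs
        have h2 : α.extend (s:ℝ) ∈ W' := hball₀ (by
          rw [Metric.mem_ball, Real.dist_eq]
          exact lt_of_le_of_lt hs (by linarith))
        rwa [hext α _ s.2.1 s.2.2] at h2
      obtain ⟨k₀, hk₀⟩ := hconv {g : C(unitInterval, X) | Set.MapsTo (⇑g) K' W'}
        ((ContinuousMap.isOpen_setOf_mapsTo hK'c hW'open).mem_nhds hαK')
      -- local control at low levels
      have hlowEx : ∀ n : ℕ, ∃ δ, 0 < δ ∧ (0 < n → ∀ q : DAset, dist q p < δ →
          ∀ j : ℕ, 1 ≤ j → j ≤ 2^(n-1) → OnCeq n j (q : ℝ × ℝ) →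
            (Γ n).extend (q : ℝ × ℝ).1 ∈ W') := by
        intro n
        by_cases hn : 0 < n
        · by_cases hon : ∃ j : ℕ, 1 ≤ j ∧ j ≤ 2^(n-1) ∧ OnCeq n j (p : ℝ × ℝ)
          · obtain ⟨j₀, hj₀1, hj₀2, hj₀C⟩ := hon
            obtain ⟨i, hi, hti⟩ := circle_axis_dyadic hn hj₀1 hj₀2 hj₀C hy
            have hagr : (Γ n).extend (p : ℝ × ℝ).1 = α.extend (p : ℝ × ℝ).1 := by
              rw [hti]
              exact hagree n hn i hi
            have hc : ContinuousAt (Γ n).extend (p : ℝ × ℝ).1 :=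
              (Γ n).continuous_extend.continuousAt
            have h2 : (Γ n).extend ⁻¹' W' ∈ nhds (p : ℝ × ℝ).1 := hc (hW'open.mem_nhds (by
              rw [hagr]
              exact hball₀ (Metric.mem_ball_self hδ₀)))
            obtain ⟨δ, hδ, hballδ⟩ := Metric.mem_nhds_iff.1 h2
            refine ⟨δ, hδ, fun _ q hq j _ _ _ => ?_⟩
            apply hballδ
            rw [Metric.mem_ball, Real.dist_eq]
            calc |(q : ℝ × ℝ).1 - (p : ℝ × ℝ).1| ≤ dist (q : ℝ × ℝ) (p : ℝ × ℝ) := by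
                  rw [Prod.dist_eq]
                  refine le_trans (le_of_eq ?_) (le_max_left _ _)
                  rw [Real.dist_eq]
            _ = dist q p := (Subtype.dist_eq q p).symm
            _ < δ := hq
          · set Cn : Set (ℝ×ℝ) := ⋃ j ∈ (↑(Finset.Icc 1 (2^(n-1))) : Set ℕ),
              {q : ℝ×ℝ | OnCeq n j q} with hCn
            have hclosed : IsClosed Cn := by
              apply Set.Finite.isClosed_biUnion (Finset.Icc 1 (2^(n-1))).finite_toSet
              intro i _
              exact isClosed_onCeq n i
            have hpnot : (p : ℝ × ℝ) ∈ Cnᶜ := by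
              intro hmem
              rw [hCn, Set.mem_iUnion₂] at hmem
              obtain ⟨i, hiT, hiC⟩ := hmem
              rw [Finset.mem_coe, Finset.mem_Icc] at hiT
              exact hon ⟨i, hiT.1, hiT.2, hiC⟩
            obtain ⟨δ, hδ, hball⟩ := Metric.isOpen_iff.1 hclosed.isOpen_compl _ hpnot
            refine ⟨δ, hδ, fun _ q hq j hj1 hj2 hC => ?_⟩
            exfalso
            have hmem : (q : ℝ × ℝ) ∈ Cn := by
              rw [hCn, Set.mem_iUnion₂]
              exact ⟨j, by rw [Finset.mem_coe, Finset.mem_Icc]; omega, hC⟩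
            have h3 := hball (show (q : ℝ × ℝ) ∈ Metric.ball (p : ℝ × ℝ) δ from by
              rw [Metric.mem_ball, ← Subtype.dist_eq]
              exact hq)
            exact h3 hmem
        · exact ⟨1, one_pos, fun h => absurd h hn⟩
      choose D hDpos hDspec using hlowEx
      set δmin : ℝ := (Finset.range (k₀+1)).inf' ⟨0, by simp⟩ D with hδmin
      have hδminpos : 0 < δmin := by
        rw [hδmin]; apply (Finset.lt_inf'_iff _).2
        exact fun i _ => hDpos i
      set δ : ℝ := min (δ₀/2) δmin with hδdef
      have hδpos : 0 < δ := lt_min (by linarith) hδminpos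
      apply Filter.mem_of_superset (Metric.ball_mem_nhds p hδpos)
      intro q hq
      have hdq : dist q p < δ := Metric.mem_ball.1 hq
      have hq1 : |(q : ℝ × ℝ).1 - (p : ℝ × ℝ).1| < δ := by
        calc |(q : ℝ × ℝ).1 - (p : ℝ × ℝ).1| ≤ dist (q : ℝ × ℝ) (p : ℝ × ℝ) := by
              rw [Prod.dist_eq]
              refine le_trans (le_of_eq ?_) (le_max_left _ _)
              rw [Real.dist_eq]
        _ = dist q p := (Subtype.dist_eq q p).symm
        _ < δ := hdq
      show F0 q ∈ W
      apply hW'sub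
      by_cases hqy : (q : ℝ × ℝ).2 = 0
      · rw [hF0base q hqy]
        apply hball₀
        rw [Metric.mem_ball, Real.dist_eq]
        exact lt_of_lt_of_le hq1 (le_trans (min_le_left _ _) (by linarith))
      · obtain ⟨n, j, hn, hj1, hj2, hC⟩ := DAset_circle q.2 hqy
        rw [hF0circ q n j hqy hn hj1 hj2 hC]
        by_cases hnk : n ≤ k₀
        · exact hDspec n hn q (lt_of_lt_of_le hdq (le_trans (min_le_right _ _)
            (Finset.inf'_le D (Finset.mem_range.2 (by omega))))) j hj1 hj2 hC
        · have hmt := hk₀ n (by omega)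
          have hq01 := DAset_x q.2
          have hsK : (⟨(q : ℝ × ℝ).1, hq01.1, hq01.2⟩ : unitInterval) ∈ K' := by
            show |(q : ℝ × ℝ).1 - (p : ℝ × ℝ).1| ≤ δ₀/2
            exact le_of_lt (lt_of_lt_of_le hq1 (min_le_left _ _))
          have h4 := hmt hsK
          rwa [hext (Γ n) _ hq01.1 hq01.2]
    · -- off the base arc
      obtain ⟨n, j, hn, hj1, hj2, hC⟩ := DAset_circle p.2 hy
      obtain ⟨δ, hδ, hδP⟩ := offaxis_nbhd p hy hn hj1 hj2 hC
      have hg : ContinuousAt (fun q : DAset => (Γ n).extend (q : ℝ × ℝ).1) p :=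
        ((Γ n).continuous_extend.comp
          (continuous_fst.comp continuous_subtype_val)).continuousAt
      apply hg.congr
      filter_upwards [Metric.ball_mem_nhds p hδ] with q hq
      obtain ⟨hqy, hqC⟩ := hδP q (Metric.mem_ball.1 hq)
      exact (hF0circ q n j hqy hn hj1 hj2 hqC).symm
  -- the continuous map f : 𝔻 → X
  set f : C(DAset, X) := ⟨F0, hcont⟩ with hfdef
  have hf : f dZero = x₀ := by
    show F0 dZero = x₀
    rw [hF0base dZero rfl]
    show α.extend 0 = x₀
    rw [Path.extend_zero]
  -- f ∘ λ_n = Γ n and f ∘ λ_∞ = α pointwise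
  have hflam : ∀ n : ℕ, 0 < n → ∀ s : unitInterval, f ((lam n) s) = (Γ n) s := by
    intro n hn s
    have hval := hlam n hn s
    by_cases hfr : Int.fract (2^(n-1) * (s:ℝ)) = 0
    · have hy0 : (((lam n) s : DAset) : ℝ × ℝ).2 = 0 := by
        rw [hval]
        exact dlf_snd_eq_zero hfr
      show F0 _ = _
      rw [hF0base _ hy0]
      have hx : (((lam n) s : DAset) : ℝ × ℝ).1 = (s:ℝ) := by rw [hval]; rfl
      rw [hx]
      obtain ⟨i, hi, hti⟩ := dlf_dyadic s.2.1 s.2.2 hfr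
      rw [hti, ← hagree n hn i hi, ← hti]; exact hext (Γ n) _ s.2.1 s.2.2
    · have hy0 : (((lam n) s : DAset) : ℝ × ℝ).2 ≠ 0 := by
        rw [hval]
        exact dlf_snd_ne_zero hfr
      obtain ⟨j, hj1, hj2, hjC⟩ := dlf_mem_circle hn s.2.1 s.2.2 hfr
      show F0 _ = _
      rw [hF0circ _ n j hy0 hn hj1 hj2 (by rw [hval]; exact hjC)]
      have hx : (((lam n) s : DAset) : ℝ × ℝ).1 = (s:ℝ) := by rw [hval]; rfl
      rw [hx]; exact hext (Γ n) _ s.2.1 s.2.2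
  have hfinf : ∀ s : unitInterval, f (lamInfPath s) = α s := by
    intro s
    show F0 _ = _
    rw [hF0base _ rfl]
    show α.extend (s:ℝ) = α s
    exact hext α _ s.2.1 s.2.2
  -- the images of the generators of S lie in H
  have hmap : Subgroup.map (inducedHom f dZero hf) (SSub lam) ≤ H := by
    rw [SSub, MonoidHom.map_closure, Subgroup.closure_le]
    rintro g ⟨g', ⟨n, hn, rfl⟩, rfl⟩
    show inducedHom f dZero hf (loopClass ((lam n).trans (lam (n+1)).symm)) ∈ H
    rw [inducedHom_loopClass]
    have hloopeq : ((((lam n).trans (lam (n+1)).symm).map f.continuous).cast hf.symm hf.symm)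
        = (Γ n).trans (Γ (n+1)).symm := by
      ext s
      show f (((lam n).trans (lam (n+1)).symm) s) = ((Γ n).trans (Γ (n+1)).symm) s
      rw [Path.trans_apply, Path.trans_apply]
      split_ifs with h
      · rw [hflam n hn]
      · simp only [Path.symm_apply, Function.comp_apply]
        rw [hflam (n+1) (Nat.succ_pos n)]
    rw [hloopeq, loopClass_coset_mul (Γ n) β (Γ (n+1)), ← loopClass_coset_inv (Γ (n+1)) β]
    exact mul_mem (inv_mem (hΓH (n+1))) (hΓH n)
  -- apply (S, d∞)-closedness and derive the contradiction
  have hd := hcl f hf hmap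
  rw [show dInfOf lam = loopClass ((lam 1).trans lamInfPath.symm) from rfl,
    inducedHom_loopClass] at hd
  have hdeq : ((((lam 1).trans lamInfPath.symm).map f.continuous).cast hf.symm hf.symm)
      = (Γ 1).trans α.symm := by
    ext s
    show f (((lam 1).trans lamInfPath.symm) s) = ((Γ 1).trans α.symm) s
    rw [Path.trans_apply, Path.trans_apply]
    split_ifs with h
    · rw [hflam 1 one_pos]
    · simp only [Path.symm_apply, Function.comp_apply]
      rw [hfinf]
  rw [hdeq] at hd
  apply hnotH
  rw [loopClass_coset_mul α (Γ 1) β, ← loopClass_coset_inv (Γ 1) α]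
  exact mul_mem (hΓH 1) (inv_mem hd)

end Dir2

/-- If `X` is homotopically path Hausdorff relative to `H`, then `H` is
`(S, d_∞)`-closed; the converse holds if the path space `C([0,1], X)` (with the
compact-open topology) is first countable. -/
theorem stmt12 {X : Type} [TopologicalSpace X] [PathConnectedSpace X] (x₀ : X)
    (H : Subgroup (FundamentalGroup X x₀))
    (lam : ℕ → Path dZero dOne) (hlam : LamSpec lam) :
    (HomotopicallyPathHausdorffRel x₀ H →
      IsTGClosed dZero (SSub lam) (dInfOf lam) x₀ H) ∧
    (FirstCountableTopology C(unitInterval, X) →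
      IsTGClosed dZero (SSub lam) (dInfOf lam) x₀ H →
      HomotopicallyPathHausdorffRel x₀ H) := by
  constructor
  · exact fun h => dir1 x₀ H lam hlam h
  · exact fun hfc h => dir2 x₀ H lam hlam hfc h
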